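/- Vizing's theorem: every simple undirected graph with maximum degree Δ admits a proper edge coloring using at most Δ+1 colors. -/

import Mathlib

set_option linter.unusedSectionVars false

open SimpleGraph

namespace Viz

variable {V : Type*} [Fintype V] [DecidableEq V] {N : ℕ}

/-- A proper partial edge coloring of `G` with colors in `Fin N`. -/
def Proper (G : SimpleGraph V) (c : Sym2 V → Option (Fin N)) : Prop :=
  (∀ e, c e ≠ none → e ∈ G.edgeSet) ∧
  ∀ ⦃v w₁ w₂ : V⦄ ⦃a : Fin N⦄, c s(v, w₁) = some a → c s(v, w₂) = some a → w₁ = w₂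

/-- Color `a` does not occur on any edge at `v`. -/
def Free (c : Sym2 V → Option (Fin N)) (v : V) (a : Fin N) : Prop :=
  ∀ w, c s(v, w) ≠ some a

lemma Proper.adj {G : SimpleGraph V} {c : Sym2 V → Option (Fin N)} (hc : Proper G c)
    {v w : V} {a : Fin N} (h : c s(v, w) = some a) : G.Adj v w := by
  have := hc.1 s(v, w) (by simp [h])
  rwa [SimpleGraph.mem_edgeSet] at this

lemma Proper.diag {G : SimpleGraph V} {c : Sym2 V → Option (Fin N)} (hc : Proper G c)
    (v : V) : c s(v, v) = none := by
  cases h : c s(v, v) with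
  | none => rfl
  | some a => exact absurd (hc.adj h) (G.irrefl)

lemma exists_free {G : SimpleGraph V} [DecidableRel G.Adj] {c : Sym2 V → Option (Fin N)}
    (hc : Proper G c) (v : V) (h : G.degree v < N) : ∃ a, Free c v a := by
  by_contra h'
  push_neg at h'
  simp only [Free, not_forall, not_not] at h'
  choose f hf using h'
  have hinj : Set.InjOn f (Finset.univ : Finset (Fin N)) := by
    intro a _ b _ hab
    have : some a = some b := by rw [← hf a, ← hf b, hab]
    exact Option.some_injective _ this
  have hmaps : ∀ a ∈ (Finset.univ : Finset (Fin N)), f a ∈ G.neighborFinset v := by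
    intro a _
    rw [SimpleGraph.mem_neighborFinset]
    exact hc.adj (hf a)
  have := Finset.card_le_card_of_injOn f hmaps hinj
  simp only [Finset.card_univ, Fintype.card_fin, SimpleGraph.card_neighborFinset_eq_degree] at this
  omega

/-- Update a coloring at one edge. -/
def upd (c : Sym2 V → Option (Fin N)) (e : Sym2 V) (o : Option (Fin N)) :
    Sym2 V → Option (Fin N) :=
  fun e' => if e' = e then o else c e'

@[simp] lemma upd_same (c : Sym2 V → Option (Fin N)) (e : Sym2 V) (o) : upd c e o e = o := by
  simp [upd]

lemma upd_ne (c : Sym2 V → Option (Fin N)) {e e' : Sym2 V} (o) (h : e' ≠ e) :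
    upd c e o e' = c e' := by simp [upd, h]

/-- Monotone transfer of freeness: if `c₂` has fewer/equal colors than `c`. -/
lemma Free.mono {c c₂ : Sym2 V → Option (Fin N)} {v : V} {a : Fin N} (h : Free c v a)
    (hle : ∀ e, c₂ e = none ∨ c₂ e = c e) : Free c₂ v a := by
  intro w hw
  rcases hle s(v, w) with h' | h'
  · rw [hw] at h'; simp at h'
  · exact h w (h' ▸ hw)

lemma Proper.mono {G : SimpleGraph V} {c c₂ : Sym2 V → Option (Fin N)} (hc : Proper G c)
    (hle : ∀ e, c₂ e = none ∨ c₂ e = c e) : Proper G c₂ := by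
  constructor
  · intro e he
    rcases hle e with h' | h'
    · exact absurd h' he
    · exact hc.1 e (h' ▸ he)
  · intro v w₁ w₂ a h1 h2
    rcases hle s(v, w₁) with h' | h'
    · rw [h1] at h'; simp at h'
    rcases hle s(v, w₂) with h'' | h''
    · rw [h2] at h''; simp at h''
    exact hc.2 (h' ▸ h1) (h'' ▸ h2)

/-- Coloring an uncolored edge with a color free at both endpoints preserves properness. -/
lemma proper_colorOne {G : SimpleGraph V} {c : Sym2 V → Option (Fin N)} (hc : Proper G c)
    {x y : V} {a : Fin N} (hadj : G.Adj x y) (hnone : c s(x, y) = none)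
    (hfx : Free c x a) (hfy : Free c y a) : Proper G (upd c s(x, y) (some a)) := by
  constructor
  · intro e he
    by_cases h : e = s(x, y)
    · subst h; exact hadj
    · rw [upd_ne _ _ h] at he; exact hc.1 e he
  · intro v w₁ w₂ t h1 h2
    by_cases e1 : s(v, w₁) = s(x, y) <;> by_cases e2 : s(v, w₂) = s(x, y)
    · exact (Sym2.congr_right).mp (e1.trans e2.symm)
    · rw [e1, upd_same] at h1
      rw [upd_ne _ _ e2] at h2
      have ht : t = a := by injection h1.symm
      subst ht
      rcases Sym2.eq_iff.mp e1 with ⟨hv, hw⟩ | ⟨hv, hw⟩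
      · subst hv; exact absurd h2 (hfx w₂)
      · subst hv; exact absurd h2 (hfy w₂)
    · rw [e2, upd_same] at h2
      rw [upd_ne _ _ e1] at h1
      have ht : t = a := by injection h2.symm
      subst ht
      rcases Sym2.eq_iff.mp e2 with ⟨hv, hw⟩ | ⟨hv, hw⟩
      · subst hv; exact absurd h1 (hfx w₁)
      · subst hv; exact absurd h1 (hfy w₁)
    · rw [upd_ne _ _ e1] at h1
      rw [upd_ne _ _ e2] at h2
      exact hc.2 h1 h2

lemma chain'_imp_mem {α : Type*} {R R' : α → α → Prop} :
    ∀ {l : List α}, (∀ p q, p ∈ l → q ∈ l.tail → R p q → R' p q) → l.Chain' R → l.Chain' R'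
  | [], _, _ => List.isChain_nil
  | a :: l, h, hc => by
    simp only [List.Chain'] at hc ⊢
    rw [List.isChain_cons] at hc ⊢
    refine ⟨fun y hy => h a y (by simp) (List.mem_of_mem_head? hy) (hc.1 y hy),
      chain'_imp_mem (fun p q hp hq => h p q (List.mem_cons_of_mem _ hp)
        (show q ∈ l from List.mem_of_mem_tail hq)) hc.2⟩

/-- The fan relation: the edge `x z` is colored with a color free at `y`. -/
def FanRel (c : Sym2 V → Option (Fin N)) (x : V) (y z : V) : Prop :=
  ∃ b : Fin N, c s(x, z) = some b ∧ Free c y b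

/-- A Vizing fan at `x`. -/
def Fan (G : SimpleGraph V) (c : Sym2 V → Option (Fin N)) (x : V) (L : List V) : Prop :=
  L.Nodup ∧ (∀ y ∈ L, G.Adj x y) ∧ (∀ y₀ ∈ L.head?, c s(x, y₀) = none) ∧
    L.Chain' (FanRel c x)

lemma fan_ne_x {G : SimpleGraph V} {c : Sym2 V → Option (Fin N)} {x : V} {L : List V}
    (hfan : Fan G c x L) {y : V} (hy : y ∈ L) : y ≠ x :=
  fun h => G.irrefl (h ▸ hfan.2.1 y hy)

/-- Rotating a fan: the first edge of the fan gets colored, nothing becomes uncolored. -/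
lemma rotate {G : SimpleGraph V} : ∀ (L : List V) (c : Sym2 V → Option (Fin N))
    (x y₀ : V), Proper G c → Fan G c x (y₀ :: L) → ∀ b : Fin N, Free c x b →
    Free c ((y₀ :: L).getLast (List.cons_ne_nil y₀ L)) b →
    ∃ c' : Sym2 V → Option (Fin N), Proper G c' ∧ ∀ e, c' e = none → c e = none ∧ e ≠ s(x, y₀) := by
  intro L
  induction L with
  | nil =>
    intro c x y₀ hc hfan b hbx hbl
    simp only [List.getLast_singleton] at hbl
    have hadj : G.Adj x y₀ := hfan.2.1 y₀ (by simp)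
    have hnone : c s(x, y₀) = none := hfan.2.2.1 y₀ (by simp)
    refine ⟨upd c s(x, y₀) (some b), proper_colorOne hc hadj hnone hbx hbl, ?_⟩
    intro e he
    by_cases h : e = s(x, y₀)
    · rw [h, upd_same] at he; simp at he
    · rw [upd_ne _ _ h] at he; exact ⟨he, h⟩
  | cons y₁ L' ih =>
    intro c x y₀ hc hfan b hbx hbl
    have hadj0 : G.Adj x y₀ := hfan.2.1 y₀ (by simp)
    have hnone0 : c s(x, y₀) = none := hfan.2.2.1 y₀ (by simp)
    obtain ⟨b₁, hb₁, hb₁free⟩ : FanRel c x y₀ y₁ := (List.isChain_cons_cons.mp hfan.2.2.2).1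
    obtain ⟨hny₀, hnd2⟩ := List.nodup_cons.mp hfan.1
    have hne01 : y₀ ≠ y₁ := fun h => hny₀ (h ▸ List.mem_cons_self)
    have hxne : ∀ y ∈ y₀ :: y₁ :: L', y ≠ x := fun y hy => fan_ne_x hfan hy
    have hedge_ne : s(x, y₀) ≠ s(x, y₁) := fun h => hne01 (Sym2.congr_right.mp h)
    set cm : Sym2 V → Option (Fin N) := upd c s(x, y₁) none with hcm
    have hcm_le : ∀ e, cm e = none ∨ cm e = c e := by
      intro e
      by_cases h : e = s(x, y₁)
      · left; rw [hcm, h, upd_same]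
      · right; rw [hcm, upd_ne _ _ h]
    have hcm_proper : Proper G cm := hc.mono hcm_le
    set c₁ : Sym2 V → Option (Fin N) := upd cm s(x, y₀) (some b₁) with hc₁
    have hcm_none : cm s(x, y₀) = none := by rw [hcm, upd_ne _ _ hedge_ne]; exact hnone0
    have hfree_x_b₁ : Free cm x b₁ := by
      intro w hw
      by_cases h : s(x, w) = s(x, y₁)
      · rw [hcm, h, upd_same] at hw; simp at hw
      · rw [hcm, upd_ne _ _ h] at hw
        exact h (by rw [hc.2 hw hb₁])
    have hfree_y₀_b₁ : Free cm y₀ b₁ := hb₁free.mono hcm_le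
    have hc₁_proper : Proper G c₁ :=
      proper_colorOne hcm_proper hadj0 hcm_none hfree_x_b₁ hfree_y₀_b₁
    have hc₁_val : ∀ e, e ≠ s(x, y₀) → e ≠ s(x, y₁) → c₁ e = c e := by
      intro e h0 h1
      rw [hc₁, upd_ne _ _ h0, hcm, upd_ne _ _ h1]
    have hc₁_y₁ : c₁ s(x, y₁) = none := by
      rw [hc₁, upd_ne _ _ (Ne.symm hedge_ne), hcm, upd_same]
    have hfree_transfer : ∀ v, v ≠ x → v ≠ y₀ → ∀ t : Fin N, Free c v t → Free c₁ v t := by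
      intro v hvx hvy₀ t ht w hw
      have h0 : s(v, w) ≠ s(x, y₀) := by
        intro h
        rcases Sym2.eq_iff.mp h with ⟨h1, _⟩ | ⟨h1, _⟩
        · exact hvx h1
        · exact hvy₀ h1
      by_cases h1 : s(v, w) = s(x, y₁)
      · rw [hc₁, upd_ne _ _ h0, hcm, h1, upd_same] at hw; simp at hw
      · rw [hc₁_val _ h0 h1] at hw; exact ht w hw
    have hfan' : Fan G c₁ x (y₁ :: L') := by
      refine ⟨hnd2, fun y hy => hfan.2.1 y (List.mem_cons_of_mem _ hy), ?_, ?_⟩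
      · intro z hz
        simp only [List.head?_cons, Option.mem_def, Option.some.injEq] at hz
        rw [← hz, hc₁_y₁]
      · have hchain : (y₁ :: L').Chain' (FanRel c x) := (List.isChain_cons_cons.mp hfan.2.2.2).2
        refine chain'_imp_mem ?_ hchain
        rintro p q hp hq ⟨t, hq', htfree⟩
        simp only [List.tail_cons] at hq
        have hqy₀ : q ≠ y₀ := fun h => hny₀ (List.mem_cons_of_mem _ (h ▸ hq))
        have hqy₁ : q ≠ y₁ := fun h => (List.nodup_cons.mp hnd2).1 (h ▸ hq)
        have h0 : s(x, q) ≠ s(x, y₀) := fun h => hqy₀ (Sym2.congr_right.mp h)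
        have h1 : s(x, q) ≠ s(x, y₁) := fun h => hqy₁ (Sym2.congr_right.mp h)
        have hpy₀ : p ≠ y₀ := fun h => hny₀ (h ▸ hp)
        exact ⟨t, by rw [hc₁_val _ h0 h1]; exact hq',
          hfree_transfer p (hxne p (List.mem_cons_of_mem _ hp)) hpy₀ t htfree⟩
    have hbx' : Free c₁ x b := by
      intro w hw
      by_cases h0 : s(x, w) = s(x, y₀)
      · rw [hc₁, h0, upd_same] at hw
        have : b = b₁ := by injection hw.symm
        exact hbx y₁ (this ▸ hb₁)
      · by_cases h1 : s(x, w) = s(x, y₁)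
        · rw [hc₁, upd_ne _ _ h0, hcm, h1, upd_same] at hw; simp at hw
        · rw [hc₁_val _ h0 h1] at hw; exact hbx w hw
    have hlast_eq : (y₀ :: y₁ :: L').getLast (List.cons_ne_nil _ _)
        = (y₁ :: L').getLast (List.cons_ne_nil _ _) := List.getLast_cons _
    have hlast_mem : (y₁ :: L').getLast (List.cons_ne_nil y₁ L') ∈ y₁ :: L' :=
      List.getLast_mem _
    have hbl' : Free c₁ ((y₁ :: L').getLast (List.cons_ne_nil y₁ L')) b := by
      refine hfree_transfer _ (hxne _ (List.mem_cons_of_mem _ hlast_mem))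
        (fun h => hny₀ (h ▸ hlast_mem)) b ?_
      rw [hlast_eq] at hbl; exact hbl
    obtain ⟨c'', hc''_proper, hc''_un⟩ := ih c₁ x y₁ hc₁_proper hfan' b hbx' hbl'
    refine ⟨c'', hc''_proper, ?_⟩
    intro e he
    obtain ⟨he₁, hey₁⟩ := hc''_un e he
    by_cases h0 : e = s(x, y₀)
    · exfalso; rw [h0, hc₁, upd_same] at he₁; simp at he₁
    · rw [hc₁_val _ h0 hey₁] at he₁; exact ⟨he₁, h0⟩

/-! ### Kempe swaps -/

/-- Swap two colors. -/
def swapf (a b : Fin N) (t : Fin N) : Fin N := if t = a then b else if t = b then a else t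

/-- Swap two colors on an option. -/
def swapc (a b : Fin N) : Option (Fin N) → Option (Fin N)
  | none => none
  | some t => some (swapf a b t)

@[simp] lemma swapc_none (a b : Fin N) : swapc a b none = none := rfl

@[simp] lemma swapc_some (a b t : Fin N) : swapc a b (some t) = some (swapf a b t) := rfl

lemma swapf_invol {a b : Fin N} (hab : a ≠ b) (t : Fin N) : swapf a b (swapf a b t) = t := by
  unfold swapf
  by_cases h1 : t = a <;> by_cases h2 : t = b <;> simp_all <;> simp [hab, Ne.symm hab]

lemma swapc_invol {a b : Fin N} (hab : a ≠ b) (o : Option (Fin N)) :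
    swapc a b (swapc a b o) = o := by
  cases o with
  | none => rfl
  | some t => simp [swapf_invol hab]

lemma swapf_other {a b t : Fin N} (ha : t ≠ a) (hb : t ≠ b) : swapf a b t = t := by
  simp [swapf, ha, hb]

lemma swapf_a {a b : Fin N} : swapf a b a = a → a = b := by
  intro h; by_contra hab; simp [swapf] at h; exact hab h.symm

/-- The graph of edges colored `a` or `b`. -/
def Hg (c : Sym2 V → Option (Fin N)) (a b : Fin N) : SimpleGraph V where
  Adj v w := v ≠ w ∧ (c s(v, w) = some a ∨ c s(v, w) = some b)
  symm := by
    refine ⟨?_⟩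
    intro v w ⟨h1, h2⟩
    exact ⟨h1.symm, by rwa [Sym2.eq_swap]⟩
  loopless := ⟨fun v h => h.1 rfl⟩

/-- The Kempe swap of colors `a`, `b` on the component of `x₀`. -/
noncomputable def kswap (c : Sym2 V → Option (Fin N)) (a b : Fin N) (x₀ : V) :
    Sym2 V → Option (Fin N) :=
  fun e =>
    letI : ∀ p : Prop, Decidable p := fun p => Classical.propDecidable p
    if ∃ v, v ∈ e ∧ (Hg c a b).Reachable x₀ v then swapc a b (c e) else c e

lemma kswap_cases (c : Sym2 V → Option (Fin N)) (a b : Fin N) (x₀ : V) (e : Sym2 V) :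
    kswap c a b x₀ e = swapc a b (c e) ∨ kswap c a b x₀ e = c e := by
  unfold kswap
  split <;> [left; right] <;> rfl

lemma kswap_none_iff (c : Sym2 V → Option (Fin N)) (a b : Fin N) (x₀ : V) (e : Sym2 V) :
    kswap c a b x₀ e = none ↔ c e = none := by
  rcases kswap_cases c a b x₀ e with h | h <;> rw [h]
  cases he : c e <;> simp

/-- On edges at a reachable vertex, the swap applies. -/
lemma kswap_reach {c : Sym2 V → Option (Fin N)} {a b : Fin N} {x₀ v : V}
    (hv : (Hg c a b).Reachable x₀ v) (w : V) :
    kswap c a b x₀ s(v, w) = swapc a b (c s(v, w)) := by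
  unfold kswap
  split
  · rfl
  · next h =>
    exfalso; exact h ⟨v, by simp, hv⟩

/-- On edges at an unreachable vertex, nothing changes. -/
lemma kswap_unreach {G : SimpleGraph V} {c : Sym2 V → Option (Fin N)} {a b : Fin N} {x₀ v : V}
    (hc : Proper G c) (hv : ¬ (Hg c a b).Reachable x₀ v) (w : V) :
    kswap c a b x₀ s(v, w) = c s(v, w) := by
  unfold kswap
  split
  · next h =>
    obtain ⟨u, hu, hru⟩ := h
    rw [Sym2.mem_iff] at hu
    cases he : c s(v, w) with
    | none => simp
    | some t =>
      by_cases hvw : v = w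
      · rw [hvw] at he; rw [hc.diag w] at he; simp at he
      by_cases ht : t = a ∨ t = b
      · -- then v and w are H-adjacent, so both reachable or both not
        have hadj : (Hg c a b).Adj v w := by
          show v ≠ w ∧ (c s(v, w) = some a ∨ c s(v, w) = some b)
          refine ⟨hvw, ?_⟩
          rcases ht with h' | h' <;> [left; right] <;> rw [he, h']
        rcases hu with h' | h'
        · exact absurd (h' ▸ hru) hv
        · exact absurd ((h' ▸ hru).trans ⟨(SimpleGraph.Walk.cons hadj SimpleGraph.Walk.nil).reverse⟩) hv
      · push_neg at ht
        simp [swapf_other ht.1 ht.2]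
  · rfl

/-- Kempe swapping preserves properness. -/
lemma kswap_proper {G : SimpleGraph V} {c : Sym2 V → Option (Fin N)} (hc : Proper G c)
    {a b : Fin N} (hab : a ≠ b) (x₀ : V) : Proper G (kswap c a b x₀) := by
  constructor
  · intro e he
    rcases kswap_cases c a b x₀ e with h | h <;> rw [h] at he
    · cases he' : c e with
      | none => rw [he'] at he; exact absurd rfl he
      | some t => exact hc.1 e (by rw [he']; simp)
    · exact hc.1 e he
  · intro v w₁ w₂ t h1 h2
    by_cases hr : (Hg c a b).Reachable x₀ v
    · rw [kswap_reach hr] at h1 h2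
      cases he1 : c s(v, w₁) with
      | none => rw [he1] at h1; simp at h1
      | some t₁ =>
        cases he2 : c s(v, w₂) with
        | none => rw [he2] at h2; simp at h2
        | some t₂ =>
          rw [he1] at h1; rw [he2] at h2
          simp only [swapc_some, Option.some.injEq] at h1 h2
          have : t₁ = t₂ := by
            rw [← swapf_invol hab t₁, ← swapf_invol hab t₂, h1, h2]
          exact hc.2 he1 (this ▸ he2)
    · rw [kswap_unreach hc hr] at h1 h2
      exact hc.2 h1 h2

/-- Freeness transfer at reachable vertices. -/
lemma kswap_free_reach {G : SimpleGraph V} {c : Sym2 V → Option (Fin N)} (hc : Proper G c)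
    {a b : Fin N} (hab : a ≠ b) {x₀ v : V} (hv : (Hg c a b).Reachable x₀ v) (t : Fin N) :
    Free (kswap c a b x₀) v t ↔ Free c v (swapf a b t) := by
  constructor <;> intro h w hw
  · apply h w
    rw [kswap_reach hv, hw]
    simp [swapf_invol hab]
  · rw [kswap_reach hv] at hw
    cases he : c s(v, w) with
    | none => rw [he] at hw; simp at hw
    | some u =>
      rw [he] at hw
      simp only [swapc_some, Option.some.injEq] at hw
      exact h w (by rw [he, ← hw, swapf_invol hab])

/-- Freeness transfer at unreachable vertices. -/
lemma kswap_free_unreach {G : SimpleGraph V} {c : Sym2 V → Option (Fin N)} (hc : Proper G c)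
    {a b : Fin N} {x₀ v : V} (hv : ¬ (Hg c a b).Reachable x₀ v) (t : Fin N) :
    Free (kswap c a b x₀) v t ↔ Free c v t := by
  constructor <;> intro h w hw
  · exact h w (by rw [kswap_unreach hc hv, hw])
  · rw [kswap_unreach hc hv] at hw; exact h w hw

lemma swapf_eq_other {a b t u : Fin N} (ha : t ≠ a) (hb : t ≠ b) (h : swapf a b u = t) :
    u = t := by
  by_cases h1 : u = a
  · subst h1; simp [swapf] at h; exact absurd h.symm hb
  by_cases h2 : u = b
  · subst h2; simp [swapf, h1] at h; exact absurd h.symm ha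
  rwa [swapf_other h1 h2] at h

/-- Freeness of colors other than `a`, `b` is always preserved. -/
lemma kswap_free_other {c : Sym2 V → Option (Fin N)}
    {a b t : Fin N} (ha : t ≠ a) (hb : t ≠ b) (x₀ v : V) :
    Free c v t → Free (kswap c a b x₀) v t := by
  intro h w hw
  rcases kswap_cases c a b x₀ s(v, w) with h' | h' <;> rw [h'] at hw
  · cases he : c s(v, w) with
    | none => rw [he] at hw; simp at hw
    | some u =>
      rw [he] at hw
      simp only [swapc_some, Option.some.injEq] at hw
      exact h w (by rw [he, swapf_eq_other ha hb hw])
  · exact h w hw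

/-! ### A connected graph of max degree two has at most two vertices of degree ≤ 1 -/

lemma walk_head {H : SimpleGraph V} {v x : V} (q : H.Walk v x) (h : v ≠ x) :
    ∃ (m : V), H.Adj v m ∧ ∃ q' : H.Walk m x, q'.length + 1 = q.length := by
  cases q with
  | nil => exact absurd rfl h
  | cons hadj q' => exact ⟨_, hadj, q', by simp⟩

lemma three_low_degree_absurd (H : SimpleGraph V)
    (hdeg : ∀ v p q r, H.Adj v p → H.Adj v q → H.Adj v r → p = q ∨ p = r ∨ q = r)
    (x u w : V) (hxu : x ≠ u) (hxw : x ≠ w) (huw : u ≠ w)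
    (hx : ∀ p q, H.Adj x p → H.Adj x q → p = q)
    (hu : ∀ p q, H.Adj u p → H.Adj u q → p = q)
    (hw : ∀ p q, H.Adj w p → H.Adj w q → p = q)
    (hru : H.Reachable x u) (hrw : H.Reachable x w) : False := by
  classical
  set K : SimpleGraph V :=
    { Adj := fun p q => H.Adj p q ∧ H.Reachable x p ∧ H.Reachable x q
      symm := ⟨fun p q ⟨h1, h2, h3⟩ => ⟨h1.symm, h3, h2⟩⟩
      loopless := ⟨fun p h => H.irrefl h.1⟩ } with hK
  have hKadj : ∀ p q, K.Adj p q ↔ H.Adj p q ∧ H.Reachable x p ∧ H.Reachable x q := by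
    intro p q; rw [hK]
  set S : Finset V := Finset.univ.filter (fun v => H.Reachable x v) with hS
  have hmemS : ∀ v, v ∈ S ↔ H.Reachable x v := by
    intro v; simp [hS]
  -- degree bounds
  have hKdeg2 : ∀ v, K.degree v ≤ 2 := by
    intro v
    by_contra h
    push_neg at h
    obtain ⟨p, hp, q, hq, r, hr, hpq, hpr, hqr⟩ := Finset.two_lt_card.mp h
    rw [SimpleGraph.mem_neighborFinset, hKadj] at hp hq hr
    rcases hdeg v p q r hp.1 hq.1 hr.1 with h' | h' | h' <;> tauto
  have hKdeg1 : ∀ v, (∀ p q, H.Adj v p → H.Adj v q → p = q) → K.degree v ≤ 1 := by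
    intro v hv
    by_contra h
    push_neg at h
    obtain ⟨p, hp, q, hq, hpq⟩ := Finset.one_lt_card.mp h
    rw [SimpleGraph.mem_neighborFinset, hKadj] at hp hq
    exact hpq (hv p q hp.1 hq.1)
  have hKdeg0 : ∀ v, ¬ H.Reachable x v → K.degree v = 0 := by
    intro v hv
    rw [SimpleGraph.degree, Finset.card_eq_zero]
    ext p
    simp only [SimpleGraph.mem_neighborFinset, hKadj, Finset.notMem_empty, iff_false]
    rintro ⟨-, h2, -⟩
    exact hv h2
  -- handshake
  have hsum : ∑ v, K.degree v = 2 * K.edgeFinset.card :=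
    SimpleGraph.sum_degrees_eq_twice_card_edges K
  have hsumS : ∑ v ∈ S, K.degree v = ∑ v, K.degree v := by
    refine Finset.sum_subset (Finset.subset_univ S) ?_
    intro v _ hv
    rw [hmemS] at hv
    exact hKdeg0 v hv
  -- the three special vertices
  set T : Finset V := {x, u, w} with hT
  have hTS : T ⊆ S := by
    intro v hv
    rw [hmemS]
    simp only [hT, Finset.mem_insert, Finset.mem_singleton] at hv
    rcases hv with h | h | h
    · rw [h]
    · rw [h]; exact hru
    · rw [h]; exact hrw
  have hTcard : T.card = 3 := by
    rw [hT]
    rw [Finset.card_insert_of_notMem (by simp [hxu, hxw]),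
      Finset.card_insert_of_notMem (by simp [huw])]
    rfl
  have hsumT : ∑ v ∈ T, K.degree v ≤ 3 := by
    calc ∑ v ∈ T, K.degree v ≤ ∑ v ∈ T, 1 := by
          refine Finset.sum_le_sum ?_
          intro v hv
          simp only [hT, Finset.mem_insert, Finset.mem_singleton] at hv
          rcases hv with h | h | h <;> subst h
          · exact hKdeg1 _ hx
          · exact hKdeg1 _ hu
          · exact hKdeg1 _ hw
      _ = 3 := by rw [Finset.sum_const, hTcard]; rfl
  have hsumRest : ∑ v ∈ S \ T, K.degree v ≤ 2 * (S \ T).card := by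
    calc ∑ v ∈ S \ T, K.degree v ≤ ∑ _v ∈ S \ T, 2 := Finset.sum_le_sum (fun v _ => hKdeg2 v)
      _ = 2 * (S \ T).card := by rw [Finset.sum_const]; ring
  have hcards : S.card = (S \ T).card + 3 := by
    rw [Finset.card_sdiff_of_subset hTS, hTcard]
    have := Finset.card_le_card hTS
    omega
  have hbound : 2 * K.edgeFinset.card + 3 ≤ 2 * S.card := by
    have h1 : ∑ v ∈ S, K.degree v = ∑ v ∈ S \ T, K.degree v + ∑ v ∈ T, K.degree v :=
      (Finset.sum_sdiff hTS).symm
    omega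
  -- injection from S.erase x into the edges
  have aux : ∀ v : V, ∃ m : V, H.Reachable x v → v ≠ x →
      K.Adj v m ∧ H.dist x m < H.dist x v := by
    intro v
    by_cases hr : H.Reachable x v ∧ v ≠ x
    · obtain ⟨p, hp⟩ := hr.1.exists_walk_length_eq_dist
      have hrev : (p.reverse : H.Walk v x).length = H.dist x v := by
        rw [SimpleGraph.Walk.length_reverse]; exact hp
      obtain ⟨mv, hadj, q', hq'⟩ := walk_head p.reverse hr.2
      refine ⟨mv, fun _ _ => ⟨⟨hadj, hr.1, ⟨q'.reverse⟩⟩, ?_⟩⟩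
      have : H.dist x mv ≤ q'.reverse.length := SimpleGraph.dist_le _
      rw [SimpleGraph.Walk.length_reverse] at this
      omega
    · exact ⟨x, fun h1 h2 => absurd ⟨h1, h2⟩ hr⟩
  choose m hm using aux
  have hinj : Set.InjOn (fun v => s(v, m v)) (S.erase x) := by
    intro v₁ hv₁ v₂ hv₂ heq
    simp only [Finset.coe_erase, Set.mem_diff, Finset.mem_coe, Set.mem_singleton_iff] at hv₁ hv₂
    have h₁ := hm v₁ ((hmemS v₁).mp hv₁.1) hv₁.2
    have h₂ := hm v₂ ((hmemS v₂).mp hv₂.1) hv₂.2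
    simp only [Sym2.eq_iff] at heq
    rcases heq with ⟨h, -⟩ | ⟨ha, hb⟩
    · exact h
    · exfalso
      have d1 := h₁.2
      have d2 := h₂.2
      rw [hb] at d1
      rw [← ha] at d2
      omega
  have hmaps : ∀ v ∈ S.erase x, s(v, m v) ∈ K.edgeFinset := by
    intro v hv
    rw [Finset.mem_erase] at hv
    have h := hm v ((hmemS v).mp hv.2) hv.1
    rw [SimpleGraph.mem_edgeFinset, SimpleGraph.mem_edgeSet]
    exact h.1
  have hcard2 : (S.erase x).card ≤ K.edgeFinset.card := by
    exact Finset.card_le_card_of_injOn _ hmaps hinj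
  have hxS : x ∈ S := (hmemS x).mpr (SimpleGraph.Reachable.refl x)
  rw [Finset.card_erase_of_mem hxS] at hcard2
  have hScard : 1 ≤ S.card := Finset.card_pos.mpr ⟨x, hxS⟩
  omega

lemma swapf_base_a (a b : Fin N) : swapf a b a = b := by simp [swapf]

lemma swapf_base_b (a b : Fin N) : swapf a b b = a := by
  by_cases h : b = a <;> simp [swapf, h]

lemma swapf_eq_b' {a b t : Fin N} (hab : a ≠ b) (h : swapf a b t = b) : t = a := by
  by_cases h1 : t = a
  · exact h1
  by_cases h2 : t = b
  · subst h2; rw [swapf_base_b] at h; exact absurd h hab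
  · rw [swapf_other h1 h2] at h; exact absurd h h2

/-- The Kempe-chain case of Vizing's argument. -/
lemma kempe_case {G : SimpleGraph V} {c : Sym2 V → Option (Fin N)} (hc : Proper G c)
    (x y₀ : V) (P' : List V) (w : V) (Q : List V)
    (hfan : Fan G c x ((y₀ :: P') ++ w :: Q))
    (b : Fin N) (hbw : c s(x, w) = some b)
    (hblast : Free c (((y₀ :: P') ++ w :: Q).getLast (by simp)) b)
    (a : Fin N) (hax : Free c x a) :
    ∃ c' : Sym2 V → Option (Fin N), Proper G c' ∧
      ∀ e, c' e = none → c e = none ∧ e ≠ s(x, y₀) := by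
  have hab : a ≠ b := fun h => hax w (h ▸ hbw)
  set L : List V := (y₀ :: P') ++ w :: Q with hL
  -- decompose the nodup and the chain
  have hnd := hfan.1
  rw [hL, List.nodup_append] at hnd
  obtain ⟨hndP, hndwQ, hdisj⟩ := hnd
  obtain ⟨hchP, hchwQ, hglue⟩ := List.isChain_append.mp hfan.2.2.2
  -- the predecessor z of w
  set z : V := (y₀ :: P').getLast (List.cons_ne_nil _ _) with hz
  have hzmem : z ∈ y₀ :: P' := List.getLast_mem _
  have hRzw : FanRel c x z w := by
    refine hglue z ?_ w ?_
    · rw [List.getLast?_eq_getLast_of_ne_nil (List.cons_ne_nil _ _)]; rfl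
    · rfl
  obtain ⟨b', hb', hfreez⟩ := hRzw
  have hbb' : b' = b := by
    have := hb'.symm.trans hbw
    injection this
  rw [hbb'] at hb' hfreez
  -- the last vertex of the fan
  set ylast : V := (w :: Q).getLast (List.cons_ne_nil _ _) with hylast
  have hlastmem : ylast ∈ w :: Q := List.getLast_mem _
  have hLq : L.getLast? = some ylast := by
    rw [hL, List.getLast?_append, List.getLast?_eq_getLast_of_ne_nil (List.cons_ne_nil w Q)]
    rfl
  have hLlast : L.getLast (by simp [hL]) = ylast := by
    have h1 : L.getLast? = some (L.getLast (by simp [hL])) :=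
      List.getLast?_eq_getLast_of_ne_nil _
    rw [h1] at hLq
    injection hLq
  have hblast' : Free c ylast b := by rw [← hLlast]; exact hblast
  have hzylast : z ≠ ylast := fun h => hdisj z hzmem ylast hlastmem h
  have hxmem : ∀ y ∈ L, y ≠ x := fun y hy => fan_ne_x hfan hy
  have hxz : x ≠ z := (hxmem z (by rw [hL]; exact List.mem_append_left _ hzmem)).symm
  have hxylast : x ≠ ylast :=
    (hxmem ylast (by rw [hL]; exact List.mem_append_right _ hlastmem)).symm
  have hwP : w ∉ y₀ :: P' := fun h => hdisj w h w List.mem_cons_self rfl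
  -- the two-colored graph and its degree bounds
  set H : SimpleGraph V := Hg c a b with hH
  have hHadj : ∀ p q, H.Adj p q ↔ p ≠ q ∧ (c s(p, q) = some a ∨ c s(p, q) = some b) := by
    intro p q; rw [hH]; rfl
  have hdeg : ∀ v p q r, H.Adj v p → H.Adj v q → H.Adj v r → p = q ∨ p = r ∨ q = r := by
    intro v p q r h1 h2 h3
    rw [hHadj] at h1 h2 h3
    rcases h1.2 with e1 | e1 <;> rcases h2.2 with e2 | e2 <;> rcases h3.2 with e3 | e3 <;>
      first
        | exact Or.inl (hc.2 e1 e2)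
        | exact Or.inr (Or.inl (hc.2 e1 e3))
        | exact Or.inr (Or.inr (hc.2 e2 e3))
  have hdegx : ∀ p q, H.Adj x p → H.Adj x q → p = q := by
    intro p q h1 h2
    rw [hHadj] at h1 h2
    rcases h1.2 with e1 | e1
    · exact absurd e1 (hax p)
    rcases h2.2 with e2 | e2
    · exact absurd e2 (hax q)
    exact hc.2 e1 e2
  have hdeg_noB : ∀ v, Free c v b → ∀ p q, H.Adj v p → H.Adj v q → p = q := by
    intro v hv p q h1 h2
    rw [hHadj] at h1 h2
    rcases h1.2 with e1 | e1
    swap; · exact absurd e1 (hv p)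
    rcases h2.2 with e2 | e2
    swap; · exact absurd e2 (hv q)
    exact hc.2 e1 e2
  -- the swapped coloring
  set c' : Sym2 V → Option (Fin N) := kswap c a b x with hc'
  have hc'proper : Proper G c' := kswap_proper hc hab x
  have hreachx : H.Reachable x x := SimpleGraph.Reachable.refl x
  have hswx : ∀ u : V, c' s(x, u) = swapc a b (c s(x, u)) := fun u => kswap_reach hreachx u
  have hfree_xb : Free c' x b := by
    intro u hu
    rw [hswx u] at hu
    cases he : c s(x, u) with
    | none => rw [he] at hu; simp at hu
    | some t =>
      rw [he] at hu
      simp only [swapc_some, Option.some.injEq] at hu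
      exact hax u (by rw [he, swapf_eq_b' hab hu])
  have hhead : c s(x, y₀) = none := hfan.2.2.1 y₀ (by rw [hL]; rfl)
  have hhead' : c' s(x, y₀) = none := by rw [hc', kswap_none_iff]; exact hhead
  -- transfer of fan relations for pairs not ending at w
  have htransfer : ∀ p q, q ≠ w → q ≠ x → FanRel c x p q → FanRel c' x p q := by
    rintro p q hqw hqx ⟨t, hq', hfr⟩
    have hta : t ≠ a := fun h => hax q (h ▸ hq')
    have htb : t ≠ b := fun h => hqw (hc.2 (h ▸ hq') hbw)
    refine ⟨t, ?_, kswap_free_other hta htb x p hfr⟩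
    rw [hswx q, hq', swapc_some, swapf_other hta htb]
  have hmemtail : ∀ q ∈ L, q ≠ x := hxmem
  by_cases hreachz : H.Reachable x z
  case neg =>
    -- use the fan y₀ :: P' and color b
    have hfan' : Fan G c' x (y₀ :: P') := by
      refine ⟨hndP, fun y hy => hfan.2.1 y (by rw [hL]; exact List.mem_append_left _ hy),
        ?_, ?_⟩
      · intro u hu
        simp only [List.head?_cons, Option.mem_def, Option.some.injEq] at hu
        rw [← hu]; exact hhead'
      · refine chain'_imp_mem ?_ hchP
        intro p q hp hq
        exact htransfer p q (fun h => hwP (h ▸ List.mem_of_mem_tail hq))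
          (hmemtail q (by rw [hL]; exact List.mem_append_left _ (List.mem_of_mem_tail hq)))
    have hfreez' : Free c' z b := by
      rw [hc', kswap_free_unreach hc hreachz]
      exact hfreez
    obtain ⟨c'', h1, h2⟩ := rotate P' c' x y₀ hc'proper hfan' b hfree_xb (by rw [← hz]; exact hfreez')
    refine ⟨c'', h1, ?_⟩
    intro e he
    obtain ⟨he1, he2⟩ := h2 e he
    rw [hc', kswap_none_iff] at he1
    exact ⟨he1, he2⟩
  case pos =>
    -- the last fan vertex is not reachable
    have hreachlast : ¬ H.Reachable x ylast := by
      intro hr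
      exact three_low_degree_absurd H hdeg x z ylast hxz hxylast hzylast hdegx
        (hdeg_noB z hfreez) (hdeg_noB ylast hblast') hreachz hr
    -- use the full fan and color b
    have hfan' : Fan G c' x L := by
      refine ⟨hfan.1, hfan.2.1, ?_, ?_⟩
      · intro u hu
        rw [hL] at hu
        simp only [List.cons_append, List.head?_cons, Option.mem_def, Option.some.injEq] at hu
        rw [← hu]; exact hhead'
      · rw [hL]; simp only [List.Chain']; rw [List.isChain_append]
        refine ⟨?_, ?_, ?_⟩
        · refine chain'_imp_mem ?_ hchP
          intro p q hp hq
          exact htransfer p q (fun h => hwP (h ▸ List.mem_of_mem_tail hq))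
            (hmemtail q (by rw [hL]; exact List.mem_append_left _ (List.mem_of_mem_tail hq)))
        · refine chain'_imp_mem ?_ hchwQ
          intro p q hp hq
          have hqQ : q ∈ Q := hq
          have hqw : q ≠ w := fun h => (List.nodup_cons.mp hndwQ).1 (h ▸ hqQ)
          exact htransfer p q hqw
            (hmemtail q (by rw [hL]; exact List.mem_append_right _ (List.mem_cons_of_mem _ hqQ)))
        · have hthird : FanRel c' x z w := by
            refine ⟨a, ?_, ?_⟩
            · rw [hswx w, hbw, swapc_some, swapf_base_b]
            · rw [hc', kswap_free_reach hc hab hreachz, swapf_base_a]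
              exact hfreez
          first
            | exact hthird
            | (intro p hp q hq
               rw [List.getLast?_eq_getLast_of_ne_nil (List.cons_ne_nil y₀ P'),
                 Option.mem_def, Option.some.injEq] at hp
               rw [List.head?_cons, Option.mem_def, Option.some.injEq] at hq
               subst hp; subst hq
               exact hthird)
    have hfreelast' : Free c' ylast b := by
      rw [hc', kswap_free_unreach hc hreachlast]
      exact hblast'
    have hLcons : L = y₀ :: (P' ++ w :: Q) := by rw [hL]; rfl
    rw [hLcons] at hfan'
    obtain ⟨c'', h1, h2⟩ := rotate (P' ++ w :: Q) c' x y₀ hc'proper hfan' b hfree_xb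
      (by
        have h1 : L.getLast? =
            some ((y₀ :: (P' ++ w :: Q)).getLast (List.cons_ne_nil _ _)) :=
          List.getLast?_eq_getLast_of_ne_nil _
        rw [hLq] at h1
        have h2 : (y₀ :: (P' ++ w :: Q)).getLast (List.cons_ne_nil _ _) = ylast :=
          (Option.some.inj h1).symm
        rw [h2]; exact hfreelast')
    refine ⟨c'', h1, ?_⟩
    intro e he
    obtain ⟨he1, he2⟩ := h2 e he
    rw [hc', kswap_none_iff] at he1
    exact ⟨he1, he2⟩

/-- Growing the fan: given any fan starting at an uncolored edge, the coloring can be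
extended to color that edge. -/
lemma grow {G : SimpleGraph V} [DecidableRel G.Adj] (hN : ∀ v, G.degree v < N) (x : V) :
    ∀ m : ℕ, ∀ c : Sym2 V → Option (Fin N), ∀ (y₀ : V) (L : List V),
    Proper G c → Fan G c x (y₀ :: L) →
    (G.neighborFinset x \ (y₀ :: L).toFinset).card ≤ m →
    ∃ c' : Sym2 V → Option (Fin N), Proper G c' ∧
      ∀ e, c' e = none → c e = none ∧ e ≠ s(x, y₀) := by
  intro m
  induction m using Nat.strong_induction_on with
  | _ m ih =>
    intro c y₀ L hc hfan hcard
    obtain ⟨b, hb⟩ := exists_free hc ((y₀ :: L).getLast (List.cons_ne_nil _ _))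
      (hN _)
    by_cases hbx : Free c x b
    · exact rotate L c x y₀ hc hfan b hbx hb
    · simp only [Free, not_forall, not_not] at hbx
      obtain ⟨w, hw⟩ := hbx
      by_cases hwL : w ∈ y₀ :: L
      · -- the color b already occurs on a fan edge: Kempe case
        have hwy₀ : w ≠ y₀ := by
          intro h
          rw [h, hfan.2.2.1 y₀ rfl] at hw
          simp at hw
        have hwL' : w ∈ L := by
          rcases List.mem_cons.mp hwL with h | h
          · exact absurd h hwy₀
          · exact h
        obtain ⟨L₁, L₂, hsplit⟩ := List.append_of_mem hwL'
        obtain ⟨a, ha⟩ := exists_free hc x (hN x)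
        subst hsplit
        have hfan' : Fan G c x ((y₀ :: L₁) ++ w :: L₂) := hfan
        have hb' : Free c (((y₀ :: L₁) ++ w :: L₂).getLast (by simp)) b := hb
        exact kempe_case hc x y₀ L₁ w L₂ hfan' b hw hb' a ha
      · -- extend the fan by w
        have hadjw : G.Adj x w := hc.adj hw
        have hwx : w ≠ x := fun h => G.irrefl (h ▸ hadjw)
        have hfan' : Fan G c x (y₀ :: (L ++ [w])) := by
          have hform : y₀ :: (L ++ [w]) = (y₀ :: L) ++ [w] := rfl
          rw [hform]
          refine ⟨?_, ?_, ?_, ?_⟩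
          · rw [List.nodup_append]
            exact ⟨hfan.1, List.nodup_singleton w,
              fun u hu v hv huv => by
                rw [List.mem_singleton] at hv; subst hv; subst huv; exact hwL hu⟩
          · intro y hy
            rcases List.mem_append.mp hy with h | h
            · exact hfan.2.1 y h
            · rw [List.mem_singleton.mp h]; exact hadjw
          · intro u hu
            have : ((y₀ :: L) ++ [w]).head? = some y₀ := rfl
            rw [this, Option.mem_def, Option.some.injEq] at hu
            rw [← hu]
            exact hfan.2.2.1 y₀ rfl
          · simp only [List.Chain']; rw [List.isChain_append]
            refine ⟨hfan.2.2.2, List.isChain_singleton w, ?_⟩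
            intro p hp q hq
            rw [List.getLast?_eq_getLast_of_ne_nil (List.cons_ne_nil y₀ L),
              Option.mem_def, Option.some.injEq] at hp
            rw [List.head?_cons, Option.mem_def, Option.some.injEq] at hq
            subst hp; subst hq
            exact ⟨b, hw, hb⟩
        have hwmem : w ∈ G.neighborFinset x \ (y₀ :: L).toFinset := by
          rw [Finset.mem_sdiff, SimpleGraph.mem_neighborFinset]
          exact ⟨hadjw, fun h => hwL (List.mem_toFinset.mp h)⟩
        have hm1 : 1 ≤ m := by
          have := Finset.card_pos.mpr ⟨w, hwmem⟩
          omega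
        have hcard' : (G.neighborFinset x \ (y₀ :: (L ++ [w])).toFinset).card ≤ m - 1 := by
          have hsets : G.neighborFinset x \ (y₀ :: (L ++ [w])).toFinset =
              (G.neighborFinset x \ (y₀ :: L).toFinset).erase w := by
            ext u
            simp only [Finset.mem_sdiff, Finset.mem_erase, List.mem_toFinset,
              List.mem_cons, List.mem_append, List.mem_singleton]
            tauto
          rw [hsets, Finset.card_erase_of_mem hwmem]
          omega
        exact ih (m - 1) (by omega) c y₀ (L ++ [w]) hc hfan' hcard'

/-- Any proper partial coloring can be completed on all edges. -/
lemma total {G : SimpleGraph V} [DecidableRel G.Adj] (hN : ∀ v, G.degree v < N) :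
    ∀ n : ℕ, ∀ c : Sym2 V → Option (Fin N), Proper G c →
    (G.edgeFinset.filter (fun e => c e = none)).card ≤ n →
    ∃ c' : Sym2 V → Option (Fin N), Proper G c' ∧ ∀ e ∈ G.edgeSet, c' e ≠ none := by
  intro n
  induction n with
  | zero =>
    intro c hc hcard
    refine ⟨c, hc, ?_⟩
    intro e he hnone
    have : e ∈ G.edgeFinset.filter (fun e => c e = none) := by
      rw [Finset.mem_filter, SimpleGraph.mem_edgeFinset]
      exact ⟨he, hnone⟩
    have := Finset.card_pos.mpr ⟨e, this⟩
    omega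
  | succ n ihn =>
    intro c hc hcard
    by_cases hall : ∀ e ∈ G.edgeSet, c e ≠ none
    · exact ⟨c, hc, hall⟩
    · push_neg at hall
      obtain ⟨e, he, hnone⟩ := hall
      induction e using Sym2.inductionOn with
      | _ x y =>
        have hadj : G.Adj x y := (SimpleGraph.mem_edgeSet G).mp he
        have hfan : Fan G c x [y] := by
          refine ⟨List.nodup_singleton y, ?_, ?_, List.isChain_singleton y⟩
          · intro u hu; rw [List.mem_singleton.mp hu]; exact hadj
          · intro u hu
            rw [List.head?_cons, Option.mem_def, Option.some.injEq] at hu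
            rw [← hu]; exact hnone
        obtain ⟨c', hc', hun⟩ := grow hN x
          (G.neighborFinset x \ ([y] : List V).toFinset).card c y [] hc hfan le_rfl
        have hsub : G.edgeFinset.filter (fun e => c' e = none) ⊆
            (G.edgeFinset.filter (fun e => c e = none)).erase s(x, y) := by
          intro e' he'
          rw [Finset.mem_filter] at he'
          obtain ⟨h1, h2⟩ := hun e' he'.2
          rw [Finset.mem_erase, Finset.mem_filter]
          exact ⟨h2, he'.1, h1⟩
        have hmem : s(x, y) ∈ G.edgeFinset.filter (fun e => c e = none) := by
          rw [Finset.mem_filter, SimpleGraph.mem_edgeFinset]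
          exact ⟨he, hnone⟩
        have hcard' : (G.edgeFinset.filter (fun e => c' e = none)).card ≤ n := by
          have h1 := Finset.card_le_card hsub
          rw [Finset.card_erase_of_mem hmem] at h1
          have h2 := Finset.card_pos.mpr ⟨s(x, y), hmem⟩
          omega
        exact ihn c' hc' hcard'

end Viz

/-- Vizing's theorem: every finite simple undirected graph with maximum degree `Δ`
admits a proper edge coloring using at most `Δ+1` colors. -/
theorem vizing {V : Type*} [Fintype V] [DecidableEq V]
    (G : SimpleGraph V) [DecidableRel G.Adj] (Δ : ℕ)
    (hΔ : ∀ v, G.degree v ≤ Δ) :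
    ∃ χ : Sym2 V → Fin (Δ + 1),
      ∀ e₁ ∈ G.edgeSet, ∀ e₂ ∈ G.edgeSet, e₁ ≠ e₂ → (∃ v, v ∈ e₁ ∧ v ∈ e₂) →
        χ e₁ ≠ χ e₂ := by
  have hN : ∀ v, G.degree v < Δ + 1 := fun v => Nat.lt_succ_of_le (hΔ v)
  have hc₀ : Viz.Proper (N := Δ + 1) G (fun _ => none) :=
    ⟨fun e he => (he rfl).elim, fun v w₁ w₂ a h _ => by simp at h⟩
  obtain ⟨c, hc, hall⟩ := Viz.total hN
    (G.edgeFinset.filter (fun e => (fun _ => (none : Option (Fin (Δ + 1)))) e = none)).card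
    (fun _ => none) hc₀ le_rfl
  refine ⟨fun e => (c e).getD ⟨0, Nat.succ_pos Δ⟩, ?_⟩
  intro e₁ he₁ e₂ he₂ hne ⟨v, hv₁, hv₂⟩
  obtain ⟨w₁, rfl⟩ := Sym2.mem_iff_exists.mp hv₁
  obtain ⟨w₂, rfl⟩ := Sym2.mem_iff_exists.mp hv₂
  obtain ⟨t₁, ht₁⟩ := Option.ne_none_iff_exists'.mp (hall _ he₁)
  obtain ⟨t₂, ht₂⟩ := Option.ne_none_iff_exists'.mp (hall _ he₂)
  simp only [ht₁, ht₂, Option.getD_some]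
  intro hEq
  subst hEq
  exact hne (by rw [hc.2 ht₁ ht₂])
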